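/- Let $q\geq5$, $m\geq2$, $1\leq s\leq q-4$, and let $f\in R_q((m-1)(q-1)+s,m)$ with Hamming weight $|f|=q-s+1$. Then the support of $f$ is contained in an affine line of $\mathbb{F}_q^m$. -/

import Mathlib

set_option linter.unusedSectionVars false

/-- Membership in the generalized Reed–Muller code `R_q(r,m)`: `f` is represented by a
polynomial of total degree at most `r` (equivalently, its reduced form has degree ≤ r). -/
def RM (F : Type) [Field F] (r m : ℕ) (f : (Fin m → F) → F) : Prop :=
  ∃ P : MvPolynomial (Fin m) F, P.totalDegree ≤ r ∧ ∀ x, MvPolynomial.eval x P = f x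

/-- Hamming weight: the size of the support of `f`. -/
def wt {F : Type} [Field F] [Fintype F] [DecidableEq F] {m : ℕ} (f : (Fin m → F) → F) : ℕ :=
  (Finset.univ.filter fun x => f x ≠ 0).card


open MvPolynomial Finset

variable {F : Type} [Field F] [Fintype F] [DecidableEq F]

lemma sum_pow_aux (k : ℕ) (hk : ¬(0 < k ∧ (Fintype.card F - 1) ∣ k)) :
    ∑ t : F, t ^ k = 0 := by
  induction k using Nat.strong_induction_on with
  | _ k ih =>
    rcases lt_or_ge k (Fintype.card F - 1) with h | h
    · exact FiniteField.sum_pow_lt_card_sub_one F k h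
    · have hq2 : 2 ≤ Fintype.card F := Fintype.one_lt_card
      have hk0 : 0 < k := lt_of_lt_of_le (by omega) h
      have hnd : ¬ (Fintype.card F - 1) ∣ k := fun hd => hk ⟨hk0, hd⟩
      have hklt : Fintype.card F - 1 < k := by
        rcases lt_or_eq_of_le h with h' | h'
        · exact h'
        · exact absurd (h' ▸ dvd_refl _) hnd
      set k' := k - (Fintype.card F - 1) with hk'
      have hk'0 : 0 < k' := by omega
      have hcongr : ∀ t : F, t ^ k = t ^ k' := by
        intro t
        rcases eq_or_ne t 0 with rfl | ht
        · rw [zero_pow hk0.ne', zero_pow hk'0.ne']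
        · have : t ^ (Fintype.card F - 1) = 1 := FiniteField.pow_card_sub_one_eq_one t ht
          calc t ^ k = t ^ (k' + (Fintype.card F - 1)) := by rw [hk']; congr 1; omega
          _ = t ^ k' * t ^ (Fintype.card F - 1) := pow_add t _ _
          _ = t ^ k' := by rw [this, mul_one]
      rw [Finset.sum_congr rfl fun t _ => hcongr t]
      refine ih k' (by omega) ?_
      rintro ⟨-, hd⟩
      exact hnd (by have := Nat.dvd_add hd (dvd_refl (Fintype.card F - 1)); rwa [hk', Nat.sub_add_cancel h] at this)

lemma sum_eval_zero {m : ℕ} (Q : MvPolynomial (Fin m) F)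
    (hQ : Q.totalDegree < m * (Fintype.card F - 1)) :
    ∑ x : Fin m → F, MvPolynomial.eval x Q = 0 := by
  simp_rw [eval_eq']
  rw [Finset.sum_comm]
  refine Finset.sum_eq_zero fun d hd => ?_
  rw [← Finset.mul_sum, ← Fintype.prod_sum fun i (t : F) => t ^ d i]
  have hex : ∃ i, ∑ t : F, t ^ d i = 0 := by
    by_contra hall
    push_neg at hall
    have hge : ∀ i : Fin m, Fintype.card F - 1 ≤ d i := by
      intro i
      have := hall i
      by_contra hlt
      push_neg at hlt
      have : ¬(0 < d i ∧ (Fintype.card F - 1) ∣ d i) := by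
        rintro ⟨h1, h2⟩
        have := Nat.le_of_dvd h1 h2
        omega
      exact hall i (sum_pow_aux _ this)
    have hsum : m * (Fintype.card F - 1) ≤ ∑ i : Fin m, d i := by
      calc m * (Fintype.card F - 1) = ∑ _i : Fin m, (Fintype.card F - 1) := by
            rw [Finset.sum_const, card_univ, Fintype.card_fin, smul_eq_mul]
      _ ≤ ∑ i : Fin m, d i := Finset.sum_le_sum fun i _ => hge i
    have hle : (∑ i : Fin m, d i) ≤ Q.totalDegree := by
      have := MvPolynomial.le_totalDegree hd
      rwa [Finsupp.sum_fintype _ _ (fun _ => rfl)] at this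
    omega
  obtain ⟨i, hi⟩ := hex
  rw [Finset.prod_eq_zero (Finset.mem_univ i) hi, mul_zero]


lemma exists_functional {m : ℕ} {u w : Fin m → F} (h : ∀ t : F, w ≠ t • u) :
    ∃ φ : (Fin m → F) →ₗ[F] F, φ u = 0 ∧ φ w ≠ 0 := by
  set W := Submodule.span F {u} with hW
  have hw : w ∉ W := by
    rw [hW, Submodule.mem_span_singleton]
    rintro ⟨t, ht⟩
    exact h t ht.symm
  have h2 : W.mkQ w ≠ 0 := by
    simpa [Submodule.mkQ_apply, Submodule.Quotient.mk_eq_zero] using hw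
  have h3 : ¬ ∀ ψ : Module.Dual F ((Fin m → F) ⧸ W), ψ (W.mkQ w) = 0 := by
    rw [Module.forall_dual_apply_eq_zero_iff F]
    exact h2
  push_neg at h3
  obtain ⟨ψ, hψ⟩ := h3
  refine ⟨ψ.comp W.mkQ, ?_, hψ⟩
  have : W.mkQ u = 0 := by
    simpa [hW, Submodule.mkQ_apply, Submodule.Quotient.mk_eq_zero] using Submodule.mem_span_singleton_self (R := F) u
  simp [this]

/-- affine form as a polynomial -/
noncomputable def affForm {m : ℕ} (φ : (Fin m → F) →ₗ[F] F) (c : F) : MvPolynomial (Fin m) F :=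
  (∑ i, MvPolynomial.C (φ (fun j => if i = j then 1 else 0)) * MvPolynomial.X i) + MvPolynomial.C c

lemma affForm_eval {m : ℕ} (φ : (Fin m → F) →ₗ[F] F) (c : F) (x : Fin m → F) :
    MvPolynomial.eval x (affForm φ c) = φ x + c := by
  rw [affForm, map_add, map_sum, eval_C]
  congr 1
  rw [LinearMap.pi_apply_eq_sum_univ φ x]
  refine Finset.sum_congr rfl fun i _ => ?_
  rw [map_mul, eval_C, eval_X, smul_eq_mul, mul_comm]

lemma affForm_deg {m : ℕ} (φ : (Fin m → F) →ₗ[F] F) (c : F) :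
    (affForm φ c).totalDegree ≤ 1 := by
  refine le_trans (totalDegree_add _ _) (max_le ?_ (by simp [totalDegree_C]))
  refine le_trans (totalDegree_finset_sum _ _) (Finset.sup_le fun i _ => ?_)
  refine le_trans (totalDegree_mul _ _) ?_
  simp [totalDegree_C, totalDegree_X]

lemma sep_point {m : ℕ} {p y : Fin m → F} (h : y ≠ p) :
    ∃ P : MvPolynomial (Fin m) F, P.totalDegree ≤ 1 ∧
      MvPolynomial.eval y P = 0 ∧ MvPolynomial.eval p P ≠ 0 := by
  obtain ⟨φ, -, hφw⟩ := exists_functional (u := (0 : Fin m → F)) (w := p - y)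
    (fun t => by simpa [sub_eq_zero] using (Ne.symm h))
  refine ⟨affForm φ (-(φ y)), affForm_deg _ _, ?_, ?_⟩
  · rw [affForm_eval]; ring
  · rw [affForm_eval]
    intro hc
    apply hφw
    rw [map_sub]
    linear_combination hc

lemma sep_line {m : ℕ} {a v p : Fin m → F} (h : ∀ t : F, p ≠ a + t • v) :
    ∃ P : MvPolynomial (Fin m) F, P.totalDegree ≤ 1 ∧
      (∀ t : F, MvPolynomial.eval (a + t • v) P = 0) ∧ MvPolynomial.eval p P ≠ 0 := by
  obtain ⟨φ, hφv, hφw⟩ := exists_functional (u := v) (w := p - a)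
    (fun t hc => h t (by rw [← hc]; abel))
  refine ⟨affForm φ (-(φ a)), affForm_deg _ _, fun t => ?_, ?_⟩
  · rw [affForm_eval, map_add, map_smul, hφv, smul_zero, add_zero]; ring
  · rw [affForm_eval]
    intro hc
    apply hφw
    rw [map_sub]
    linear_combination hc

lemma sep_finset {m : ℕ} (p : Fin m → F) (R : Finset (Fin m → F)) (hp : p ∉ R) :
    ∃ P : MvPolynomial (Fin m) F, P.totalDegree ≤ R.card ∧
      (∀ y ∈ R, MvPolynomial.eval y P = 0) ∧ MvPolynomial.eval p P ≠ 0 := by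
  induction R using Finset.cons_induction with
  | empty => exact ⟨1, by simp, by simp, by simp⟩
  | cons y R hy ih =>
    have hyp : y ≠ p := fun hc => hp (by rw [← hc]; exact Finset.mem_cons_self _ _)
    obtain ⟨P1, hd1, he1, hp1⟩ := sep_point hyp
    obtain ⟨P2, hd2, he2, hp2⟩ := ih (fun hc => hp (Finset.mem_cons_of_mem hc))
    refine ⟨P1 * P2, ?_, ?_, ?_⟩
    · refine le_trans (totalDegree_mul _ _) ?_
      rw [Finset.card_cons]
      omega
    · intro z hz
      rcases Finset.mem_cons.mp hz with rfl | hz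
      · rw [map_mul, he1, zero_mul]
      · rw [map_mul, he2 z hz, mul_zero]
    · rw [map_mul]; exact mul_ne_zero hp1 hp2

section Main
variable {F : Type} [Field F] [Fintype F] [DecidableEq F]

omit [Field F] [Fintype F] [DecidableEq F] in
/-- Second weight codewords of `R_q((m-1)(q-1)+s, m)`, `1 ≤ s ≤ q-4`, have support
included in an affine line. -/
theorem stmt3 {F : Type} [Field F] [Fintype F] [DecidableEq F] {m s : ℕ}
    (hq : 5 ≤ Fintype.card F) (hm : 2 ≤ m) (hs1 : 1 ≤ s) (hs2 : s ≤ Fintype.card F - 4)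
    (f : (Fin m → F) → F)
    (hf : RM F ((m - 1) * (Fintype.card F - 1) + s) m f)
    (hw : wt f = Fintype.card F - s + 1) :
    ∃ p v : Fin m → F, ∀ x : Fin m → F, f x ≠ 0 → ∃ c : F, x = p + c • v := by
  classical
  obtain ⟨P, hPdeg, hPeval⟩ := hf
  set q := Fintype.card F with hqdef
  set S : Finset (Fin m → F) := Finset.univ.filter (fun x => f x ≠ 0) with hSdef
  have hScard : S.card = q - s + 1 := hw
  have hmemS : ∀ x : Fin m → F, x ∈ S ↔ f x ≠ 0 := by
    intro x; rw [hSdef, Finset.mem_filter]; simp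
  by_contra hcon
  push_neg at hcon
  -- master contradiction lemma
  have master : ∀ p ∈ S, ∀ G : MvPolynomial (Fin m) F, G.totalDegree ≤ q - s - 2 →
      (∀ y ∈ S, y ≠ p → MvPolynomial.eval y G = 0) → MvPolynomial.eval p G ≠ 0 → False := by
    intro p hp G hGdeg hGvan hGp
    have hQdeg : (P * G).totalDegree < m * (q - 1) := by
      obtain ⟨m', rfl⟩ : ∃ m', m = m' + 1 := ⟨m - 1, by omega⟩
      have h1 : P.totalDegree ≤ m' * (q - 1) + s := by simpa using hPdeg
      have h2 := totalDegree_mul P G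
      have h3 : (m' + 1) * (q - 1) = m' * (q - 1) + (q - 1) := by ring
      have h5 : 5 ≤ q := hq
      set A := m' * (q - 1)
      omega
    have h0 := sum_eval_zero (P * G) hQdeg
    have hsum : ∑ x : Fin m → F, MvPolynomial.eval x (P * G) = f p * MvPolynomial.eval p G := by
      rw [Finset.sum_eq_single p]
      · rw [map_mul, hPeval]
      · intro b _ hbp
        rw [map_mul, hPeval]
        rcases eq_or_ne (f b) 0 with hb | hb
        · rw [hb, zero_mul]
        · rw [hGvan b ((hmemS b).mpr hb) hbp, mul_zero]
      · intro h; exact absurd (Finset.mem_univ p) h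
    rw [h0] at hsum
    have hfp : f p ≠ 0 := (hmemS p).mp hp
    exact hGp (by
      rcases mul_eq_zero.mp hsum.symm with h | h
      · exact absurd h hfp
      · exact h)
  by_cases hB : ∃ a v : Fin m → F, 3 ≤ (S.filter fun x => ∃ t : F, x = a + t • v).card
  · -- some line contains at least 3 points of S
    obtain ⟨a, v, hT⟩ := hB
    set T : Finset (Fin m → F) := S.filter (fun x => ∃ t : F, x = a + t • v) with hTdef
    obtain ⟨p, hfp, hpoff⟩ := hcon a v
    have hpS : p ∈ S := (hmemS p).mpr hfp
    have hpT : p ∉ T := by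
      rw [hTdef, Finset.mem_filter]
      rintro ⟨-, t, ht⟩
      exact hpoff t ht
    obtain ⟨P1, hd1, hv1, hp1⟩ := sep_line hpoff
    set R : Finset (Fin m → F) := (S \ T).erase p with hRdef
    have hpR : p ∉ R := Finset.notMem_erase _ _
    obtain ⟨P2, hd2, hv2, hp2⟩ := sep_finset p R hpR
    have hRcard : R.card = S.card - T.card - 1 := by
      rw [hRdef, Finset.card_erase_of_mem (Finset.mem_sdiff.mpr ⟨hpS, hpT⟩),
        Finset.card_sdiff_of_subset (Finset.filter_subset _ _)]
    refine master p hpS (P1 * P2) ?_ ?_ ?_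
    · refine le_trans (totalDegree_mul _ _) ?_
      have h5 : 5 ≤ q := hq
      omega
    · intro y hy hyp
      by_cases hyT : y ∈ T
      · obtain ⟨-, t, rfl⟩ := Finset.mem_filter.mp hyT
        rw [map_mul, hv1 t, zero_mul]
      · have hyR : y ∈ R := Finset.mem_erase.mpr ⟨hyp, Finset.mem_sdiff.mpr ⟨hy, hyT⟩⟩
        rw [map_mul, hv2 y hyR, mul_zero]
    · rw [map_mul]; exact mul_ne_zero hp1 hp2
  · -- no 3 points of S are collinear
    push_neg at hB
    have hn5 : 5 ≤ S.card := by omega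
    obtain ⟨p, hpS⟩ := Finset.card_pos.mp (by omega : 0 < S.card)
    set S1 := S.erase p with hS1
    have hc1 : S1.card = S.card - 1 := Finset.card_erase_of_mem hpS
    obtain ⟨a, haS1⟩ := Finset.card_pos.mp (by omega : 0 < S1.card)
    set S2 := S1.erase a with hS2
    have hc2 : S2.card = S1.card - 1 := Finset.card_erase_of_mem haS1
    obtain ⟨b, hbS2⟩ := Finset.card_pos.mp (by omega : 0 < S2.card)
    set S3 := S2.erase b with hS3
    have hc3 : S3.card = S2.card - 1 := Finset.card_erase_of_mem hbS2
    obtain ⟨c, hcS3⟩ := Finset.card_pos.mp (by omega : 0 < S3.card)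
    set S4 := S3.erase c with hS4
    have hc4 : S4.card = S3.card - 1 := Finset.card_erase_of_mem hcS3
    obtain ⟨d, hdS4⟩ := Finset.card_pos.mp (by omega : 0 < S4.card)
    set R := S4.erase d with hR
    have hcR : R.card = S4.card - 1 := Finset.card_erase_of_mem hdS4
    -- unpack memberships and distinctness
    have hap : a ≠ p := (Finset.mem_erase.mp haS1).1
    have haS : a ∈ S := (Finset.mem_erase.mp haS1).2
    have hbS1 : b ∈ S1 := (Finset.mem_erase.mp hbS2).2
    have hba : b ≠ a := (Finset.mem_erase.mp hbS2).1
    have hbp : b ≠ p := (Finset.mem_erase.mp hbS1).1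
    have hbS : b ∈ S := (Finset.mem_erase.mp hbS1).2
    have hcS2 : c ∈ S2 := (Finset.mem_erase.mp hcS3).2
    have hcb : c ≠ b := (Finset.mem_erase.mp hcS3).1
    have hcS1 : c ∈ S1 := (Finset.mem_erase.mp hcS2).2
    have hca : c ≠ a := (Finset.mem_erase.mp hcS2).1
    have hcp : c ≠ p := (Finset.mem_erase.mp hcS1).1
    have hcS : c ∈ S := (Finset.mem_erase.mp hcS1).2
    have hdS3 : d ∈ S3 := (Finset.mem_erase.mp hdS4).2
    have hdc : d ≠ c := (Finset.mem_erase.mp hdS4).1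
    have hdS2 : d ∈ S2 := (Finset.mem_erase.mp hdS3).2
    have hdb : d ≠ b := (Finset.mem_erase.mp hdS3).1
    have hdS1 : d ∈ S1 := (Finset.mem_erase.mp hdS2).2
    have hda : d ≠ a := (Finset.mem_erase.mp hdS2).1
    have hdp : d ≠ p := (Finset.mem_erase.mp hdS1).1
    have hdS : d ∈ S := (Finset.mem_erase.mp hdS1).2
    -- no three distinct points of S are collinear
    have no3 : ∀ x y z : Fin m → F, x ∈ S → y ∈ S → z ∈ S → x ≠ y → x ≠ z → y ≠ z →
        ∀ t : F, z ≠ x + t • (y - x) := by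
      intro x y z hx hy hz hxy hxz hyz t hzt
      have hsub : ({x, y, z} : Finset (Fin m → F)) ⊆
          S.filter (fun w => ∃ u : F, w = x + u • (y - x)) := by
        intro w hw
        simp only [Finset.mem_insert, Finset.mem_singleton] at hw
        rw [Finset.mem_filter]
        rcases hw with rfl | rfl | rfl
        · exact ⟨hx, 0, by simp⟩
        · exact ⟨hy, 1, by rw [one_smul]; abel⟩
        · exact ⟨hz, t, hzt⟩
      have hc3' : ({x, y, z} : Finset (Fin m → F)).card = 3 := by
        rw [Finset.card_insert_of_notMem (by simp [hxy, hxz]),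
          Finset.card_insert_of_notMem (by simp [hyz]), Finset.card_singleton]
      have := Finset.card_le_card hsub
      rw [hc3'] at this
      exact absurd this (by have := hB x (y - x); omega)
    -- line form through a, b avoiding p
    have hpab : ∀ t : F, p ≠ a + t • (b - a) :=
      no3 a b p haS hbS hpS (Ne.symm hba) hap hbp
    have hpcd : ∀ t : F, p ≠ c + t • (d - c) :=
      no3 c d p hcS hdS hpS (Ne.symm hdc) hcp hdp
    obtain ⟨P1, hd1, hv1, hp1⟩ := sep_line hpab
    obtain ⟨P2, hd2, hv2, hp2⟩ := sep_line hpcd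
    have hpR : p ∉ R := by
      intro h
      have h1 := (Finset.mem_erase.mp h).2
      have h2 := (Finset.mem_erase.mp h1).2
      have h3 := (Finset.mem_erase.mp h2).2
      have h4 := (Finset.mem_erase.mp h3).2
      exact (Finset.mem_erase.mp h4).1 rfl
    obtain ⟨P3, hd3, hv3, hp3⟩ := sep_finset p R hpR
    refine master p hpS (P1 * P2 * P3) ?_ ?_ ?_
    · refine le_trans (totalDegree_mul _ _) ?_
      have := totalDegree_mul P1 P2
      have h5 : 5 ≤ q := hq
      omega
    · intro y hy hyp
      rcases eq_or_ne y a with rfl | hya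
      · rw [map_mul, map_mul]
        have : MvPolynomial.eval y P1 = 0 := by
          have := hv1 0; simpa using this
        rw [this, zero_mul, zero_mul]
      rcases eq_or_ne y b with rfl | hyb
      · rw [map_mul, map_mul]
        have : MvPolynomial.eval y P1 = 0 := by
          have := hv1 1; rw [one_smul] at this
          rwa [show a + (y - a) = y by abel] at this
        rw [this, zero_mul, zero_mul]
      rcases eq_or_ne y c with rfl | hyc
      · rw [map_mul, map_mul]
        have : MvPolynomial.eval y P2 = 0 := by
          have := hv2 0; simpa using this
        rw [this, mul_zero, zero_mul]
      rcases eq_or_ne y d with rfl | hyd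
      · rw [map_mul, map_mul]
        have : MvPolynomial.eval y P2 = 0 := by
          have := hv2 1; rw [one_smul] at this
          rwa [show c + (y - c) = y by abel] at this
        rw [this, mul_zero, zero_mul]
      · have hyR : y ∈ R :=
          Finset.mem_erase.mpr ⟨hyd, Finset.mem_erase.mpr ⟨hyc, Finset.mem_erase.mpr
            ⟨hyb, Finset.mem_erase.mpr ⟨hya, Finset.mem_erase.mpr ⟨hyp, hy⟩⟩⟩⟩⟩
        rw [map_mul, hv3 y hyR, mul_zero]
    · rw [map_mul, map_mul]
      exact mul_ne_zero (mul_ne_zero hp1 hp2) hp3
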